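/- arXiv:1903.10949 — 4 statements merged into one kernel-verified Lean document; each statement's English description precedes it below -/
import Mathlib

section
/- For every natural number n and angles θ : Fin n → ℝ, the Gray code map g (which is a bijection of the set of n-bit strings) simultaneously permutes the rows and columns of the classical transition probability matrix onto the Gray-ordered quantum transition probability matrix: for all n-bit strings J' and J, P^qG_{J',J} = P^cl_{g(J'), g(J)}. In particular, there exists a permutation of the n-bit strings mapping the classical transition probability matrix to the Gray-ordered quantum transition probability matrix. -/
/-- The bit `B_{ℓ+1}` of an `n`-bit string, with the convention `B_n = 0`. -/
def nextBit (n : ℕ) (B : Fin n → ZMod 2) (ℓ : Fin n) : ZMod 2 :=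
  if h : (ℓ : ℕ) + 1 < n then B ⟨(ℓ : ℕ) + 1, h⟩ else 0

/-- The Gray code map on `n`-bit strings: `g(B)_ℓ = B_{ℓ+1} ⊕ B_ℓ` with `B_n = 0`. -/
def gray (n : ℕ) (B : Fin n → ZMod 2) : Fin n → ZMod 2 :=
  fun ℓ => nextBit n B ℓ + B ℓ

/-- Classical random-walk kernel. -/
noncomputable def fcl (n : ℕ) (θ : Fin n → ℝ) (I : Fin n → ZMod 2) : ℝ :=
  ∏ ℓ : Fin n,
    if I ℓ = 0 then Real.cos (θ ℓ / 2) ^ 2 else Real.sin (θ ℓ / 2) ^ 2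

/-- Gray-ordered quantum random-walk kernel, with the convention `I_n = 0`. -/
noncomputable def fqG (n : ℕ) (θ : Fin n → ℝ) (I : Fin n → ZMod 2) : ℝ :=
  ∏ ℓ : Fin n,
    if I ℓ + nextBit n I ℓ = 0 then Real.cos (θ ℓ / 2) ^ 2 else Real.sin (θ ℓ / 2) ^ 2

/-- Classical transition probability matrix. -/
noncomputable def Pcl (n : ℕ) (θ : Fin n → ℝ) :
    Matrix (Fin n → ZMod 2) (Fin n → ZMod 2) ℝ :=
  Matrix.of fun J' J => fcl n θ (J' + J)

/-- Gray-ordered quantum transition probability matrix. -/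
noncomputable def PqG (n : ℕ) (θ : Fin n → ℝ) :
    Matrix (Fin n → ZMod 2) (Fin n → ZMod 2) ℝ :=
  Matrix.of fun J' J => fqG n θ (J' + J)

lemma z2_cancel {a b : ZMod 2} (h : a + b = 0) : a = b := by
  rw [add_eq_zero_iff_eq_neg, CharTwo.neg_eq] at h
  exact h

lemma gray_add (n : ℕ) (B C : Fin n → ZMod 2) :
    gray n (B + C) = gray n B + gray n C := by
  funext ℓ
  simp only [gray, nextBit, Pi.add_apply]
  split_ifs <;> ring

lemma fcl_gray (n : ℕ) (θ : Fin n → ℝ) (I : Fin n → ZMod 2) :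
    fcl n θ (gray n I) = fqG n θ I := by
  unfold fcl fqG gray
  exact Finset.prod_congr rfl fun ℓ _ => by rw [add_comm]

lemma gray_eq_zero {n : ℕ} {A : Fin n → ZMod 2} (h : gray n A = 0) : A = 0 := by
  have key : ∀ m : ℕ, ∀ ℓ : Fin n, n - (ℓ : ℕ) ≤ m → A ℓ = 0 := by
    intro m
    induction m with
    | zero => intro ℓ hℓ; omega
    | succ m ih =>
      intro ℓ hℓ
      have h0 : nextBit n A ℓ + A ℓ = 0 := congrFun h ℓ
      have hA : A ℓ = nextBit n A ℓ := (z2_cancel h0).symm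
      rw [hA, nextBit]
      split_ifs with h1
      · exact ih ⟨(ℓ : ℕ) + 1, h1⟩ (by simp; omega)
      · rfl
  funext ℓ
  exact key n ℓ (by omega)

lemma gray_inj (n : ℕ) : Function.Injective (gray n) := by
  intro B C h
  have : gray n (B + C) = 0 := by
    rw [gray_add, h]
    funext ℓ
    simp [CharTwo.add_self_eq_zero]
  have h2 := gray_eq_zero this
  funext ℓ
  have := congrFun h2 ℓ
  simp only [Pi.add_apply, Pi.zero_apply] at this
  exact z2_cancel this

noncomputable def grayEquiv (n : ℕ) : Equiv.Perm (Fin n → ZMod 2) :=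
  Equiv.ofBijective (gray n) ((Finite.injective_iff_bijective).mp (gray_inj n))

theorem stmt_4 (n : ℕ) (θ : Fin n → ℝ) :
    (∀ J' J : Fin n → ZMod 2, PqG n θ J' J = Pcl n θ (gray n J') (gray n J)) ∧
    ∃ π : Equiv.Perm (Fin n → ZMod 2),
      ∀ J' J : Fin n → ZMod 2, PqG n θ J' J = Pcl n θ (π J') (π J) := by
  have main : ∀ J' J : Fin n → ZMod 2, PqG n θ J' J = Pcl n θ (gray n J') (gray n J) := by
    intro J' J
    simp only [PqG, Pcl, Matrix.of_apply]
    rw [← gray_add, fcl_gray]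
  exact ⟨main, grayEquiv n, main⟩
end

section
/- For every natural number n, angles θ : Fin n → ℝ, and all n-bit strings J' and J, the square of the classical transition probability matrix factorizes bitwise: ((P^cl)²)_{J',J} = ∏_{ℓ=0}^{n−1} c_ℓ, where, writing I := J' ⊕ J, c_ℓ = cos⁴(θ_ℓ/2) + sin⁴(θ_ℓ/2) if I_ℓ = 0 and c_ℓ = 2 cos²(θ_ℓ/2) sin²(θ_ℓ/2) if I_ℓ = 1. -/
lemma zmod2_sum (f : ZMod 2 → ℝ) : ∑ k : ZMod 2, f k = f 0 + f 1 := by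
  exact Fin.sum_univ_two f

theorem stmt_13 (n : ℕ) (θ : Fin n → ℝ) (J' J : Fin n → ZMod 2) :
    (Pcl n θ ^ 2) J' J =
      ∏ ℓ : Fin n,
        if (J' + J) ℓ = 0 then
          Real.cos (θ ℓ / 2) ^ 4 + Real.sin (θ ℓ / 2) ^ 4
        else
          2 * Real.cos (θ ℓ / 2) ^ 2 * Real.sin (θ ℓ / 2) ^ 2 := by
  rw [pow_two, Matrix.mul_apply]
  simp only [Pcl, fcl, Matrix.of_apply, ← Finset.prod_mul_distrib]
  have key : ∀ K : Fin n → ZMod 2,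
      (∏ ℓ : Fin n,
        ((if (J' + K) ℓ = 0 then Real.cos (θ ℓ / 2) ^ 2 else Real.sin (θ ℓ / 2) ^ 2) *
         (if (K + J) ℓ = 0 then Real.cos (θ ℓ / 2) ^ 2 else Real.sin (θ ℓ / 2) ^ 2))) =
      ∏ ℓ : Fin n,
        ((if J' ℓ + K ℓ = 0 then Real.cos (θ ℓ / 2) ^ 2 else Real.sin (θ ℓ / 2) ^ 2) *
         (if K ℓ + J ℓ = 0 then Real.cos (θ ℓ / 2) ^ 2 else Real.sin (θ ℓ / 2) ^ 2)) := by
    intro K; rfl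
  simp only [key]
  rw [show (∑ K : Fin n → ZMod 2, ∏ ℓ : Fin n,
      ((if J' ℓ + K ℓ = 0 then Real.cos (θ ℓ / 2) ^ 2 else Real.sin (θ ℓ / 2) ^ 2) *
       (if K ℓ + J ℓ = 0 then Real.cos (θ ℓ / 2) ^ 2 else Real.sin (θ ℓ / 2) ^ 2))) =
      ∏ ℓ : Fin n, ∑ k : ZMod 2,
      ((if J' ℓ + k = 0 then Real.cos (θ ℓ / 2) ^ 2 else Real.sin (θ ℓ / 2) ^ 2) *
       (if k + J ℓ = 0 then Real.cos (θ ℓ / 2) ^ 2 else Real.sin (θ ℓ / 2) ^ 2)) from ?_]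
  · apply Finset.prod_congr rfl
    intro ℓ _
    rw [zmod2_sum]
    have h2 : ∀ x : ZMod 2, x = 0 ∨ x = 1 := by decide
    rcases h2 (J' ℓ) with h1 | h1 <;> rcases h2 (J ℓ) with h3 | h3 <;>
      simp [h1, h3, Pi.add_apply, show ((1:ZMod 2)+1 = 0) by decide] <;> ring
  · rw [Finset.prod_univ_sum]
    simp [Fintype.piFinset_univ]
end

section
/- Let N be a positive integer, let P be an N×N real matrix with nonnegative entries whose every row sums to 1 (∑_J P_{I,J} = 1 for all I), let γ be a real number with 0 < γ < 1, let b : Fin N → ℝ, and let M ≥ 0 satisfy |b_I| ≤ M for all I. Set x := (1 − γ·P)⁻¹ *ᵥ b and, for a natural number c, set x⁽ᶜ⁾ := ∑_{s=0}^{c} γ^s · (P^s *ᵥ b). Then for every index I₀, the truncation error satisfies |x_{I₀} − x⁽ᶜ⁾_{I₀}| ≤ γ^{c+1} · M / (1 − γ). -/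
open Matrix

theorem stmt_17 (N : ℕ) (hN : 0 < N) (P : Matrix (Fin N) (Fin N) ℝ)
    (hpos : ∀ I J, 0 ≤ P I J) (hrow : ∀ I, ∑ J, P I J = 1)
    (γ : ℝ) (hγ0 : 0 < γ) (hγ1 : γ < 1)
    (b : Fin N → ℝ) (M : ℝ) (hM : 0 ≤ M) (hb : ∀ I, |b I| ≤ M)
    (c : ℕ) (I₀ : Fin N) :
    abs (((1 - γ • P)⁻¹ *ᵥ b) I₀ -
        (∑ s ∈ Finset.range (c + 1), γ ^ s • (P ^ s *ᵥ b)) I₀) ≤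
      γ ^ (c + 1) * M / (1 - γ) := by
  have hne : (Finset.univ : Finset (Fin N)).Nonempty := ⟨⟨0, hN⟩, Finset.mem_univ _⟩
  have h1γ : 0 < 1 - γ := by linarith
  set A := (1 : Matrix (Fin N) (Fin N) ℝ) - γ • P with hAdef
  -- helper: a stochastic matrix does not increase the sup bound
  have hPbound : ∀ (v : Fin N → ℝ) (C : ℝ), (∀ J, |v J| ≤ C) → ∀ I, |(P *ᵥ v) I| ≤ C := by
    intro v C hv I
    calc |(P *ᵥ v) I| = |∑ J, P I J * v J| := rfl
      _ ≤ ∑ J, |P I J * v J| := Finset.abs_sum_le_sum_abs _ _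
      _ ≤ ∑ J, P I J * C := by
          apply Finset.sum_le_sum; intro J _
          rw [abs_mul, abs_of_nonneg (hpos I J)]
          exact mul_le_mul_of_nonneg_left (hv J) (hpos I J)
      _ = C := by rw [← Finset.sum_mul, hrow, one_mul]
  have hAv : ∀ v : Fin N → ℝ, A *ᵥ v = v - γ • (P *ᵥ v) := by
    intro v
    rw [hAdef, Matrix.sub_mulVec, Matrix.one_mulVec, Matrix.smul_mulVec]
  -- invertibility of A
  have hdet : IsUnit A.det := by
    rw [isUnit_iff_ne_zero]
    intro h
    obtain ⟨v, hv0, hv⟩ := (Matrix.exists_mulVec_eq_zero_iff).2 h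
    rw [hAv] at hv
    have hveq : ∀ I, v I = γ * (P *ᵥ v) I := by
      intro I
      have := congrFun hv I
      simp only [Pi.sub_apply, Pi.smul_apply, smul_eq_mul, Pi.zero_apply] at this
      linarith
    set K := Finset.univ.sup' hne (fun I => |v I|) with hKdef
    have hK : ∀ J, |v J| ≤ K := fun J => Finset.le_sup' (fun I => |v I|) (Finset.mem_univ J)
    obtain ⟨I, -, hI⟩ := Finset.exists_mem_eq_sup' hne (fun I => |v I|)
    have hKle : K ≤ γ * K := by
      rw [← hKdef] at hI
      calc K = |v I| := hI
        _ = γ * |(P *ᵥ v) I| := by rw [hveq I, abs_mul, abs_of_pos hγ0]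
        _ ≤ γ * K := mul_le_mul_of_nonneg_left (hPbound v K hK I) hγ0.le
    obtain ⟨J, hJ⟩ := Function.ne_iff.1 hv0
    have : (0:ℝ) < |v J| := abs_pos.2 hJ
    nlinarith [hK J]
  set y := A⁻¹ *ᵥ b with hydef
  have hy : A *ᵥ y = b := by
    rw [hydef, Matrix.mulVec_mulVec, Matrix.mul_nonsing_inv A hdet, Matrix.one_mulVec]
  have hyrec : y = b + γ • (P *ᵥ y) := by
    rw [hAv] at hy
    funext I
    have := congrFun hy I
    simp only [Pi.sub_apply, Pi.smul_apply, smul_eq_mul] at this ⊢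
    simp only [Pi.add_apply, Pi.smul_apply, smul_eq_mul]
    linarith
  -- bound on y
  clear_value y
  have hyB : ∀ I, |y I| ≤ M / (1 - γ) := by
    set K := Finset.univ.sup' hne (fun I => |y I|) with hKdef
    have hK : ∀ J, |y J| ≤ K := fun J => Finset.le_sup' (fun I => |y I|) (Finset.mem_univ J)
    obtain ⟨I, -, hI⟩ := Finset.exists_mem_eq_sup' hne (fun I => |y I|)
    rw [← hKdef] at hI
    have hKle : K ≤ M + γ * K := by
      calc K = |y I| := hI
        _ = |b I + γ * (P *ᵥ y) I| := by rw [congrFun hyrec I]; simp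
        _ ≤ |b I| + |γ * (P *ᵥ y) I| := abs_add_le _ _
        _ ≤ M + γ * K := by
            refine add_le_add (hb I) ?_
            rw [abs_mul, abs_of_pos hγ0]
            exact mul_le_mul_of_nonneg_left (hPbound y K hK I) hγ0.le
    have hKB : K ≤ M / (1 - γ) := by
      rw [le_div_iff₀ h1γ]; nlinarith
    exact fun I => le_trans (hK I) hKB
  -- powers bound
  have hpow : ∀ s I, |(P ^ s *ᵥ y) I| ≤ M / (1 - γ) := by
    intro s
    induction s with
    | zero => simpa using hyB
    | succ n ih =>
        intro I
        have : P ^ (n + 1) *ᵥ y = P *ᵥ (P ^ n *ᵥ y) := by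
          rw [pow_succ', Matrix.mulVec_mulVec]
        rw [this]
        exact hPbound _ _ ih I
  -- the telescoping identity
  have hid : ∀ m : ℕ,
      y = (∑ s ∈ Finset.range (m + 1), γ ^ s • (P ^ s *ᵥ b)) + γ ^ (m + 1) • (P ^ (m + 1) *ᵥ y) := by
    intro m
    induction m with
    | zero =>
        simpa using hyrec
    | succ n ih =>
        rw [Finset.sum_range_succ]
        calc y = (∑ s ∈ Finset.range (n + 1), γ ^ s • (P ^ s *ᵥ b)) + γ ^ (n + 1) • (P ^ (n + 1) *ᵥ y) := ih
          _ = (∑ s ∈ Finset.range (n + 1), γ ^ s • (P ^ s *ᵥ b)) +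
              γ ^ (n + 1) • (P ^ (n + 1) *ᵥ (b + γ • (P *ᵥ y))) := by rw [← hyrec]
          _ = ((∑ s ∈ Finset.range (n + 1), γ ^ s • (P ^ s *ᵥ b)) + γ ^ (n + 1) • (P ^ (n + 1) *ᵥ b)) +
              γ ^ (n + 1 + 1) • (P ^ (n + 1 + 1) *ᵥ y) := by
            rw [Matrix.mulVec_add, Matrix.mulVec_smul, smul_add, add_assoc]
            congr 1
            rw [smul_smul, ← pow_succ, Matrix.mulVec_mulVec, ← pow_succ]
  -- finish
  have hkey := congrFun (hid c) I₀
  rw [hkey]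
  have : ((∑ s ∈ Finset.range (c + 1), γ ^ s • (P ^ s *ᵥ b)) + γ ^ (c + 1) • (P ^ (c + 1) *ᵥ y)) I₀ -
      (∑ s ∈ Finset.range (c + 1), γ ^ s • (P ^ s *ᵥ b)) I₀ = γ ^ (c + 1) * (P ^ (c + 1) *ᵥ y) I₀ := by
    simp
  rw [this, abs_mul, abs_of_pos (pow_pos hγ0 _), mul_div_assoc]
  exact mul_le_mul_of_nonneg_left (hpow (c + 1) I₀) (pow_pos hγ0 _).le
end

section
/- The Gray code gives single-distance coding of consecutive integers: for every natural number k, the bitwise XOR of the Gray codes of k and k+1 is a power of two, i.e. there exists a natural number t such that (k XOR (k/2)) XOR ((k+1) XOR ((k+1)/2)) = 2^t, where k/2 denotes the floor division (right shift by one bit). -/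
lemma xor_div_two (a b : ℕ) : (a ^^^ b) / 2 = a / 2 ^^^ b / 2 := by
  apply Nat.eq_of_testBit_eq
  intro i
  simp [Nat.testBit_div_two, Nat.testBit_xor]

lemma succ_xor (k : ℕ) : ∃ n : ℕ, k ^^^ (k + 1) = 2 ^ (n + 1) - 1 := by
  induction k using Nat.strong_induction_on with
  | _ k ih =>
    rcases Nat.even_or_odd k with ⟨m, hm⟩ | ⟨m, hm⟩
    · refine ⟨0, ?_⟩
      subst hm
      have h1 : m + m = Nat.bit false m := by simp [Nat.bit]; omega
      have h2 : m + m + 1 = Nat.bit true m := by simp [Nat.bit]; omega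
      rw [h2, h1, Nat.xor_bit]
      simp [Nat.bit]
    · subst hm
      obtain ⟨n, hn⟩ := ih m (by omega)
      refine ⟨n + 1, ?_⟩
      have h1 : 2 * m + 1 = Nat.bit true m := by simp [Nat.bit]
      have h2 : 2 * m + 1 + 1 = Nat.bit false (m + 1) := by simp [Nat.bit]; omega
      rw [h2, h1, Nat.xor_bit, hn]
      have hp : (0:ℕ) < 2 ^ (n+1) := Nat.pow_pos (by norm_num)
      simp [Nat.bit]
      have : (2:ℕ) ^ (n + 1 + 1) = 2 * 2 ^ (n + 1) := by ring
      omega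

theorem stmt_18 (k : ℕ) :
    ∃ t : ℕ, (k ^^^ (k / 2)) ^^^ ((k + 1) ^^^ ((k + 1) / 2)) = 2 ^ t := by
  obtain ⟨n, hn⟩ := succ_xor k
  refine ⟨n, ?_⟩
  have hre : (k ^^^ (k / 2)) ^^^ ((k + 1) ^^^ ((k + 1) / 2))
      = (k ^^^ (k + 1)) ^^^ ((k ^^^ (k + 1)) / 2) := by
    apply Nat.eq_of_testBit_eq
    intro i
    simp only [Nat.testBit_xor, Nat.testBit_div_two]
    cases k.testBit i <;> cases (k+1).testBit i <;>
      cases k.testBit (i+1) <;> cases (k+1).testBit (i+1) <;> rfl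
  rw [hre, hn]
  have hdiv : (2 ^ (n + 1) - 1) / 2 = 2 ^ n - 1 := by
    have h0 : (0:ℕ) < 2 ^ n := Nat.pow_pos (by norm_num)
    have : (2:ℕ) ^ (n+1) = 2 * 2 ^ n := by ring
    omega
  rw [hdiv]
  clear hn hre hdiv
  apply Nat.eq_of_testBit_eq
  intro i
  simp only [Nat.testBit_xor, Nat.testBit_two_pow_sub_one, Nat.testBit_two_pow]
  by_cases h : i < n <;> by_cases h2 : i < n + 1 <;> simp [h, h2] <;> omega
end
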